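/- arXiv:1702.00739 — 2 statements merged into one kernel-verified Lean document; each statement's English description precedes it below -/
import Mathlib

section
/- Define B̌(G) := min over D ∈ ℝ^{2×2} of ∫_{-1/2}^{1/2} Q₂(D + tG + B̌(t)) dt, with B̌(t) as the piecewise-constant bilayer profile taking values M̌₁ on [0,1/2) and M̌₂ on (-1/2,0). Then B̌(G) = (1/12) Q₂(G + (3/2)(M̌₁ - M̌₂)) + c - (1/4) Q₂(M̌₁ + M̌₂), where c = (1/16)[5Q₂(M̌₁) + 5Q₂(M̌₂) + 6L(M̌₁,M̌₂)]. -/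
open Matrix MeasureTheory

/-- Symmetric part of a matrix. -/
noncomputable def symPart (M : Matrix (Fin 2) (Fin 2) ℝ) : Matrix (Fin 2) (Fin 2) ℝ :=
  (1 / 2 : ℝ) • (M + Mᵀ)

/-- `Q₂(G) = 2μ(|sym G|² + γ (tr G)²)`. -/
noncomputable def Q2 (μ γ : ℝ) (G : Matrix (Fin 2) (Fin 2) ℝ) : ℝ :=
  2 * μ * ((∑ i, ∑ j, (symPart G i j) ^ 2) + γ * (Matrix.trace G) ^ 2)

/-- Bilinear form associated with `Q₂`. -/
noncomputable def L2 (μ γ : ℝ) (G H : Matrix (Fin 2) (Fin 2) ℝ) : ℝ :=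
  2 * μ * ((∑ i, ∑ j, symPart G i j * symPart H i j) +
    γ * Matrix.trace G * Matrix.trace H)

/-- Piecewise constant bilayer profile. -/
noncomputable def bilayerB (M₁ M₂ : Matrix (Fin 2) (Fin 2) ℝ) (t : ℝ) :
    Matrix (Fin 2) (Fin 2) ℝ :=
  if 0 ≤ t then M₁ else M₂

lemma Q2_texp (μ γ t : ℝ) (D G M : Matrix (Fin 2) (Fin 2) ℝ) :
    Q2 μ γ (D + t • G + M) =
      Q2 μ γ (D + M) + 2 * t * L2 μ γ (D + M) G + t ^ 2 * Q2 μ γ G := by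
  simp only [Q2, L2, symPart, Matrix.trace, Matrix.diag, Fin.sum_univ_two,
    Matrix.add_apply, Matrix.smul_apply, Matrix.transpose_apply, smul_eq_mul]
  ring

lemma Q2_nonneg (μ γ : ℝ) (hμ : 0 < μ) (hγ : 0 < γ) (A : Matrix (Fin 2) (Fin 2) ℝ) :
    0 ≤ Q2 μ γ A := by
  unfold Q2
  have h : (0:ℝ) ≤ ∑ i, ∑ j, (symPart A i j)^2 :=
    Finset.sum_nonneg fun i _ => Finset.sum_nonneg fun j _ => sq_nonneg _
  positivity

lemma poly_int (a b c u v : ℝ) :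
    ∫ t in u..v, (a + 2 * t * b + t ^ 2 * c) =
      a * (v - u) + b * (v ^ 2 - u ^ 2) + c * (v ^ 3 - u ^ 3) / 3 := by
  have hd : ∀ t ∈ Set.uIcc u v,
      HasDerivAt (fun t => a * t + b * t ^ 2 + c * t ^ 3 / 3)
        (a + 2 * t * b + t ^ 2 * c) t := by
    intro t _
    have h := (((hasDerivAt_id t).const_mul a).add
      ((hasDerivAt_pow 2 t).const_mul b)).add
      (((hasDerivAt_pow 3 t).const_mul c).div_const 3)
    refine h.congr_deriv ?_
    push_cast; ring
  rw [intervalIntegral.integral_eq_sub_of_hasDerivAt hd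
    ((Continuous.intervalIntegrable (by continuity) u v))]
  ring

lemma integral_val (μ γ : ℝ) (M₁ M₂ G D : Matrix (Fin 2) (Fin 2) ℝ) :
    (∫ t in (-(1:ℝ)/2)..(1/2), Q2 μ γ (D + t • G + bilayerB M₁ M₂ t)) =
      (Q2 μ γ (D + M₁) + Q2 μ γ (D + M₂)) / 2 +
        (L2 μ γ (D + M₁) G - L2 μ γ (D + M₂) G) / 4 + Q2 μ γ G / 12 := by
  set f := fun t : ℝ => Q2 μ γ (D + t • G + bilayerB M₁ M₂ t) with hf
  set g₁ := fun t : ℝ =>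
    Q2 μ γ (D + M₁) + 2 * t * L2 μ γ (D + M₁) G + t ^ 2 * Q2 μ γ G with hg₁
  set g₂ := fun t : ℝ =>
    Q2 μ γ (D + M₂) + 2 * t * L2 μ γ (D + M₂) G + t ^ 2 * Q2 μ γ G with hg₂
  have h0 : ∀ᵐ x : ℝ, x ≠ (0:ℝ) := by
    filter_upwards [compl_mem_ae_iff.mpr (measure_singleton (0:ℝ))] with x hx
    simpa using hx
  have heq1 : Set.EqOn f g₁ (Set.uIcc (0:ℝ) (1/2)) := by
    intro t ht
    rw [Set.uIcc_of_le (by norm_num)] at ht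
    simp only [hf, hg₁, bilayerB, if_pos ht.1, Q2_texp]
  have heq2 : ∀ᵐ x : ℝ, x ∈ Set.uIoc (-(1:ℝ)/2) 0 → f x = g₂ x := by
    filter_upwards [h0] with x hx hmem
    rw [Set.uIoc_of_le (by norm_num)] at hmem
    have hneg : ¬ (0 ≤ x) := not_le.mpr (lt_of_le_of_ne hmem.2 hx)
    simp only [hf, hg₂, bilayerB, if_neg hneg, Q2_texp]
  have hcont1 : Continuous g₁ := by continuity
  have hcont2 : Continuous g₂ := by continuity
  have hint1 : IntervalIntegrable f volume 0 (1/2) := by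
    refine (hcont1.intervalIntegrable 0 (1/2)).congr ?_
    intro x hx
    exact (heq1 (Set.uIoc_subset_uIcc hx)).symm
  have hint2 : IntervalIntegrable f volume (-(1:ℝ)/2) 0 := by
    refine (hcont2.intervalIntegrable (-(1:ℝ)/2) 0).congr_ae ?_
    filter_upwards [ae_restrict_mem measurableSet_uIoc, ae_restrict_of_ae heq2]
      with x hx h
    exact (h hx).symm
  have e1 : (∫ t in (0:ℝ)..(1/2), f t) = ∫ t in (0:ℝ)..(1/2), g₁ t :=
    intervalIntegral.integral_congr heq1
  have e2 : (∫ t in (-(1:ℝ)/2)..(0:ℝ), f t) = ∫ t in (-(1:ℝ)/2)..(0:ℝ), g₂ t :=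
    intervalIntegral.integral_congr_ae heq2
  rw [← intervalIntegral.integral_add_adjacent_intervals hint2 hint1, e1, e2,
    hg₁, hg₂, poly_int, poly_int]
  ring

theorem bilayer_relaxed_energy (μ γ : ℝ) (hμ : 0 < μ) (hγ : 0 < γ)
    (M₁ M₂ : Matrix (Fin 2) (Fin 2) ℝ) (h₁ : M₁ᵀ = M₁) (h₂ : M₂ᵀ = M₂)
    (G : Matrix (Fin 2) (Fin 2) ℝ) :
    IsLeast {x : ℝ | ∃ D : Matrix (Fin 2) (Fin 2) ℝ,
        x = ∫ t in (-(1:ℝ)/2)..(1/2), Q2 μ γ (D + t • G + bilayerB M₁ M₂ t)}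
      ((1 / 12) * Q2 μ γ (G + (3 / 2 : ℝ) • (M₁ - M₂)) +
        (1 / 16) * (5 * Q2 μ γ M₁ + 5 * Q2 μ γ M₂ + 6 * L2 μ γ M₁ M₂) -
        (1 / 4) * Q2 μ γ (M₁ + M₂)) := by
  constructor
  · refine ⟨-((1/2 : ℝ) • (M₁ + M₂)), ?_⟩
    rw [integral_val]
    simp only [Q2, L2, symPart, Matrix.trace, Matrix.diag, Fin.sum_univ_two,
      Matrix.add_apply, Matrix.smul_apply, Matrix.sub_apply, Matrix.neg_apply,
      Matrix.transpose_apply, smul_eq_mul]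
    ring
  · rintro x ⟨D, rfl⟩
    rw [integral_val]
    have hpos := Q2_nonneg μ γ hμ hγ (D + (1/2 : ℝ) • (M₁ + M₂))
    have key : (Q2 μ γ (D + M₁) + Q2 μ γ (D + M₂)) / 2 +
        (L2 μ γ (D + M₁) G - L2 μ γ (D + M₂) G) / 4 + Q2 μ γ G / 12 -
        ((1 / 12) * Q2 μ γ (G + (3 / 2 : ℝ) • (M₁ - M₂)) +
        (1 / 16) * (5 * Q2 μ γ M₁ + 5 * Q2 μ γ M₂ + 6 * L2 μ γ M₁ M₂) -
        (1 / 4) * Q2 μ γ (M₁ + M₂)) = Q2 μ γ (D + (1/2 : ℝ) • (M₁ + M₂)) := by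
      simp only [Q2, L2, symPart, Matrix.trace, Matrix.diag, Fin.sum_univ_two,
        Matrix.add_apply, Matrix.smul_apply, Matrix.sub_apply, Matrix.neg_apply,
        Matrix.transpose_apply, smul_eq_mul]
      ring
    linarith
end

section
/- Let Q₂(G) = 2μ(|sym G|² + γ tr²G) on 2×2 matrices, μ > 0, γ ≥ 0, and let Ā = k·diag(-1, 1) with k > 0. Among 2×2 symmetric matrices A with det A = 0 (rank at most 1), the minimum of Q₂(A - Ā) is 2μk²(1 + 2γ)/(1+γ), attained exactly at A = (k/(1+γ))·diag(-1, 0) and A = (k/(1+γ))·diag(0, 1). -/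
open Matrix

lemma Q2_value (μ γ k : ℝ) (A : Matrix (Fin 2) (Fin 2) ℝ) (hA : Aᵀ = A) :
    Q2 μ γ (A - k • !![(-1 : ℝ), 0; 0, 1]) =
      2 * μ * ((A 0 0 + k) ^ 2 + 2 * (A 0 1) ^ 2 + (A 1 1 - k) ^ 2
        + γ * (A 0 0 + A 1 1) ^ 2) := by
  have h10 : A 1 0 = A 0 1 := by
    have := congrFun (congrFun hA 1) 0
    simpa [Matrix.transpose_apply] using this.symm
  simp only [Q2, symPart, Matrix.smul_apply, Matrix.add_apply, Matrix.transpose_apply,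
    Matrix.sub_apply, Matrix.trace_fin_two, Fin.sum_univ_two, smul_eq_mul]
  simp only [show (!![(-1:ℝ),0;0,1]) 0 0 = -1 from rfl, show (!![(-1:ℝ),0;0,1]) 0 1 = 0 from rfl,
    show (!![(-1:ℝ),0;0,1]) 1 0 = 0 from rfl, show (!![(-1:ℝ),0;0,1]) 1 1 = 1 from rfl, h10]
  ring

/-- The fundamental algebraic identity. -/
lemma key_id (γ k a b c : ℝ) :
    ((a + k) ^ 2 + 2 * b ^ 2 + (c - k) ^ 2 + γ * (a + c) ^ 2) * (1 + γ)
      = k ^ 2 * (1 + 2 * γ) + ((1 + γ) * (a - c) + k) ^ 2 + (2 * ((1 + γ) * b)) ^ 2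
        + (1 + γ) * (2 + 4 * γ) * (a * c - b * b) := by
  ring

lemma key_ineq (γ k a b c : ℝ) (hγ : 0 ≤ γ) (hk : 0 < k) (hdet : a * c - b * b = 0) :
    k ^ 2 * (1 + 2 * γ) / (1 + γ) ≤
      (a + k) ^ 2 + 2 * b ^ 2 + (c - k) ^ 2 + γ * (a + c) ^ 2 := by
  have h1 : (0 : ℝ) < 1 + γ := by linarith
  rw [div_le_iff₀ h1]
  have hid := key_id γ k a b c
  rw [hdet, mul_zero] at hid
  nlinarith [sq_nonneg ((1 + γ) * (a - c) + k), sq_nonneg (2 * ((1 + γ) * b))]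

lemma uniq_entries (γ k a b c : ℝ) (hγ : 0 ≤ γ) (hdet : a * c - b * b = 0)
    (hf : ((a + k) ^ 2 + 2 * b ^ 2 + (c - k) ^ 2 + γ * (a + c) ^ 2) * (1 + γ)
      = k ^ 2 * (1 + 2 * γ)) :
    (a = -(k / (1 + γ)) ∧ b = 0 ∧ c = 0) ∨ (a = 0 ∧ b = 0 ∧ c = k / (1 + γ)) := by
  have h1 : (0 : ℝ) < 1 + γ := by linarith
  have h1' : (1 + γ : ℝ) ≠ 0 := ne_of_gt h1
  have hid := key_id γ k a b c
  rw [hdet, mul_zero, add_zero, hf] at hid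
  have hb2 : (2 * ((1 + γ) * b)) ^ 2 = 0 := by
    nlinarith [sq_nonneg ((1 + γ) * (a - c) + k), sq_nonneg (2 * ((1 + γ) * b))]
  have hb : b = 0 := by
    have h := pow_eq_zero_iff (n := 2) (by norm_num) |>.mp hb2
    rcases mul_eq_zero.mp h with h' | h'
    · norm_num at h'
    · rcases mul_eq_zero.mp h' with h'' | h''
      · exact absurd h'' h1'
      · exact h''
  have hd : (1 + γ) * (a - c) + k = 0 := by
    have h : ((1 + γ) * (a - c) + k) ^ 2 = 0 := by rw [hb2] at hid; linarith
    exact pow_eq_zero_iff (n := 2) (by norm_num) |>.mp h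
  have hac0 : a * c = 0 := by rw [hb] at hdet; linarith
  rcases mul_eq_zero.mp hac0 with ha | hc
  · right
    refine ⟨ha, hb, ?_⟩
    rw [eq_div_iff h1']
    nlinarith [hd, ha]
  · left
    refine ⟨?_, hb, hc⟩
    have : a * (1 + γ) = -k := by nlinarith [hd, hc]
    field_simp
    linarith [this]

theorem twist_pointwise_min_over_degenerate (μ γ k : ℝ) (hμ : 0 < μ) (hγ : 0 ≤ γ)
    (hk : 0 < k) :
    IsLeast {x : ℝ | ∃ A : Matrix (Fin 2) (Fin 2) ℝ, Aᵀ = A ∧ A.det = 0 ∧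
        x = Q2 μ γ (A - k • !![(-1 : ℝ), 0; 0, 1])}
      (2 * μ * k ^ 2 * (1 + 2 * γ) / (1 + γ)) ∧
    (∀ A : Matrix (Fin 2) (Fin 2) ℝ, Aᵀ = A → A.det = 0 →
      Q2 μ γ (A - k • !![(-1 : ℝ), 0; 0, 1]) = 2 * μ * k ^ 2 * (1 + 2 * γ) / (1 + γ) →
      A = (k / (1 + γ)) • !![(-1 : ℝ), 0; 0, 0] ∨
      A = (k / (1 + γ)) • !![(0 : ℝ), 0; 0, 1]) := by
  have h1 : (0 : ℝ) < 1 + γ := by linarith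
  have h1' : (1 + γ : ℝ) ≠ 0 := ne_of_gt h1
  constructor
  · constructor
    · -- membership: attained at A = (k/(1+γ)) • diag(0,1)
      refine ⟨(k / (1 + γ)) • !![(0 : ℝ), 0; 0, 1], ?_, ?_, ?_⟩
      · ext i j
        fin_cases i <;> fin_cases j <;> simp [Matrix.transpose_apply]
      · simp [Matrix.det_fin_two]
      · rw [Q2_value μ γ k _ (by ext i j; fin_cases i <;> fin_cases j <;>
          simp [Matrix.transpose_apply])]
        simp only [Matrix.smul_apply, Matrix.of_apply, Matrix.cons_val', Matrix.cons_val_zero,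
          Matrix.cons_val_one, Matrix.head_cons, Matrix.head_fin_const,
          Matrix.empty_val', Matrix.cons_val_fin_one, smul_eq_mul, mul_zero, mul_one]
        field_simp
        ring
    · -- lower bound
      rintro x ⟨A, hA, hdet, rfl⟩
      rw [Q2_value μ γ k A hA]
      have h10 : A 1 0 = A 0 1 := by
        have := congrFun (congrFun hA 1) 0
        simpa [Matrix.transpose_apply] using this.symm
      rw [Matrix.det_fin_two, h10] at hdet
      have hkey := key_ineq γ k (A 0 0) (A 0 1) (A 1 1) hγ hk (by linarith)
      have h2 : 2 * μ * k ^ 2 * (1 + 2 * γ) / (1 + γ)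
          = 2 * μ * (k ^ 2 * (1 + 2 * γ) / (1 + γ)) := by ring
      rw [h2]
      have h2μ : (0 : ℝ) < 2 * μ := by linarith
      exact (mul_le_mul_iff_right₀ h2μ).mpr hkey
  · -- uniqueness
    intro A hA hdet heq
    have h10 : A 1 0 = A 0 1 := by
      have := congrFun (congrFun hA 1) 0
      simpa [Matrix.transpose_apply] using this.symm
    rw [Matrix.det_fin_two, h10] at hdet
    rw [Q2_value μ γ k A hA] at heq
    have hdet' : A 0 0 * A 1 1 - A 0 1 * A 0 1 = 0 := by linarith
    have h2mu : (2 * μ : ℝ) ≠ 0 := by positivity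
    have hf : ((A 0 0 + k) ^ 2 + 2 * (A 0 1) ^ 2 + (A 1 1 - k) ^ 2
        + γ * (A 0 0 + A 1 1) ^ 2) * (1 + γ) = k ^ 2 * (1 + 2 * γ) := by
      have h3 : 2 * μ * ((A 0 0 + k) ^ 2 + 2 * (A 0 1) ^ 2 + (A 1 1 - k) ^ 2
          + γ * (A 0 0 + A 1 1) ^ 2)
          = 2 * μ * (k ^ 2 * (1 + 2 * γ) / (1 + γ)) := by rw [heq]; ring
      have h4 := mul_left_cancel₀ h2mu h3
      field_simp at h4
      linarith
    rcases uniq_entries γ k (A 0 0) (A 0 1) (A 1 1) hγ hdet' hf with ⟨ha, hb, hc⟩ | ⟨ha, hb, hc⟩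
    · left
      ext i j
      fin_cases i <;> fin_cases j <;>
        simp [Matrix.smul_apply, ha, hb, hc, h10, smul_eq_mul]
    · right
      ext i j
      fin_cases i <;> fin_cases j <;>
        simp [Matrix.smul_apply, ha, hb, hc, h10, smul_eq_mul]
end
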